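/- (Okumura's lemma, used in the proof of Lemma 2.3.) Let n ≥ 2 and let S be a trace-free symmetric n×n real matrix. Then |tr(S³)| = |∑_{i,j,k} S_{ij}S_{jk}S_{ki}| ≤ ((n−2)/√(n(n−1)))·|S|³. -/

import Mathlib

open Finset

lemma okumura_scalar_one (n : ℕ) (hn : 2 ≤ n) (x : Fin n → ℝ) (hx : ∑ i, x i = 0) :
    -(((n:ℝ) - 2) / Real.sqrt (n * ((n:ℝ) - 1)) * (Real.sqrt (∑ i, (x i)^2))^3)
      ≤ ∑ i, (x i)^3 := by
  set N : ℝ := (n : ℝ) with hN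
  have hN2 : (2:ℝ) ≤ N := by rw [hN]; exact_mod_cast hn
  set σ : ℝ := ∑ i, (x i)^2 with hσ
  have hσ0 : 0 ≤ σ := Finset.sum_nonneg fun i _ => sq_nonneg _
  have hNN : 0 < N * (N - 1) := by nlinarith
  set t : ℝ := Real.sqrt (σ / (N * (N - 1))) with ht
  have ht0 : 0 ≤ t := Real.sqrt_nonneg _
  have ht2 : N * (N - 1) * t^2 = σ := by
    rw [ht, Real.sq_sqrt (by positivity)]
    field_simp
    exact mul_div_cancel_left₀ σ (by linarith : N - 1 ≠ 0)
  have hbound : ∀ i, (x i)^2 ≤ ((N - 1) * t)^2 := by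
    intro i
    have h1 : ∑ j ∈ univ.erase i, x j = - x i := by
      rw [Finset.sum_erase_eq_sub (mem_univ i), hx]; ring
    have h2 : (∑ j ∈ univ.erase i, x j)^2
        ≤ (#(univ.erase i) : ℝ) * ∑ j ∈ univ.erase i, (x j)^2 :=
      sq_sum_le_card_mul_sum_sq
    have h3 : ∑ j ∈ univ.erase i, (x j)^2 = σ - (x i)^2 := by
      rw [Finset.sum_erase_eq_sub (mem_univ i)]
    have h4 : (#(univ.erase i) : ℝ) = N - 1 := by
      rw [Finset.card_erase_of_mem (mem_univ i), Finset.card_univ, Fintype.card_fin]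
      have h1n : (1:ℕ) ≤ n := by omega
      push_cast [h1n]; ring
    rw [h1, h3, h4] at h2
    nlinarith
  have hge : ∀ i, 0 ≤ x i + (N - 1) * t := by
    intro i
    nlinarith [hbound i, mul_nonneg (by nlinarith : (0:ℝ) ≤ N - 1) ht0]
  have hkey : 0 ≤ ∑ i, (x i + (N - 1) * t) * (x i - t)^2 :=
    Finset.sum_nonneg fun i _ => mul_nonneg (hge i) (sq_nonneg _)
  have hexpand : ∑ i, (x i + (N - 1) * t) * (x i - t)^2
      = (∑ i, (x i)^3) + (N - 3) * t * σ + (3 - 2*N) * t^2 * (∑ i, x i)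
        + N * ((N - 1) * t^3) := by
    have h : ∀ i ∈ univ, (x i + (N - 1) * t) * (x i - t)^2
        = (x i)^3 + (N - 3) * t * (x i)^2 + (3 - 2*N) * t^2 * (x i)
          + (N - 1) * t^3 := fun i _ => by ring
    rw [Finset.sum_congr rfl h]
    simp only [Finset.sum_add_distrib, ← Finset.mul_sum, Finset.sum_const,
      Finset.card_univ, Fintype.card_fin, nsmul_eq_mul, ← hσ, ← hN]
    ring
  rw [hexpand, hx] at hkey
  have hcube : ((N:ℝ) - 2) / Real.sqrt (N * (N - 1)) * (Real.sqrt σ)^3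
      = (N - 2) * t * σ := by
    rw [ht, Real.sqrt_div hσ0]
    rw [show (Real.sqrt σ)^3 = σ * Real.sqrt σ by
      rw [pow_succ, Real.sq_sqrt hσ0]]
    field_simp
  rw [show ((n:ℝ) - 2) = N - 2 from rfl, hcube]
  nlinarith [hkey, ht2, mul_nonneg ht0 hσ0]

lemma okumura_scalar (n : ℕ) (hn : 2 ≤ n) (x : Fin n → ℝ) (hx : ∑ i, x i = 0) :
    |∑ i, (x i)^3|
      ≤ ((n:ℝ) - 2) / Real.sqrt (n * ((n:ℝ) - 1)) * (Real.sqrt (∑ i, (x i)^2))^3 := by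
  rw [abs_le]
  constructor
  · exact okumura_scalar_one n hn x hx
  · have h := okumura_scalar_one n hn (fun i => - x i) (by simp [hx])
    have hc : ∀ a : ℝ, (-a)^3 = -(a^3) := fun a => Odd.neg_pow ⟨1, by norm_num⟩ _
    simp only [neg_sq, hc, Finset.sum_neg_distrib] at h
    linarith

lemma trace_pow_eq_sum_eigenvalues {n : ℕ} (A : Matrix (Fin n) (Fin n) ℝ)
    (hA : A.IsHermitian) (k : ℕ) :
    (A ^ k).trace = ∑ i, hA.eigenvalues i ^ k := by
  set U : Matrix (Fin n) (Fin n) ℝ :=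
    (Matrix.IsHermitian.eigenvectorUnitary hA : Matrix (Fin n) (Fin n) ℝ) with hU
  have hU1 : star U * U = 1 :=
    (Matrix.mem_unitaryGroup_iff').mp (Matrix.IsHermitian.eigenvectorUnitary hA).2
  have hU2 : U * star U = 1 :=
    (Matrix.mem_unitaryGroup_iff).mp (Matrix.IsHermitian.eigenvectorUnitary hA).2
  set D : Matrix (Fin n) (Fin n) ℝ := Matrix.diagonal (RCLike.ofReal ∘ hA.eigenvalues) with hD
  have hspec : A = U * D * star U := hA.spectral_theorem
  have hpow : A ^ k = U * D ^ k * star U := by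
    induction k with
    | zero => simp [pow_zero, hU2]
    | succ k ih =>
      rw [pow_succ, ih, hspec, pow_succ]
      rw [show U * D ^ k * star U * (U * D * star U)
          = U * D ^ k * (star U * U) * D * star U by noncomm_ring]
      rw [hU1]
      noncomm_ring
  rw [hpow, Matrix.trace_mul_cycle, hU1, Matrix.one_mul,
    hD, Matrix.diagonal_pow, Matrix.trace_diagonal]
  simp

/-- **Okumura's lemma.** For a trace-free symmetric `n×n` real matrix `S` (`n ≥ 2`):
`|∑ S_{ij}S_{jk}S_{ki}| ≤ ((n−2)/√(n(n−1)))·|S|³`. -/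
theorem okumura_lemma
    (n : ℕ) (hn : 2 ≤ n)
    (S : Fin n → Fin n → ℝ)
    (hSsymm : ∀ i j, S i j = S j i)
    (hStr : ∑ i, S i i = 0) :
    |∑ i, ∑ j, ∑ k, S i j * S j k * S k i|
      ≤ ((n - 2 : ℝ) / Real.sqrt (n * (n - 1)))
          * (Real.sqrt (∑ i, ∑ j, (S i j) ^ 2)) ^ 3 := by
  set A : Matrix (Fin n) (Fin n) ℝ := Matrix.of S with hA
  have hHerm : A.IsHermitian := by
    ext i j
    simp [Matrix.conjTranspose_apply, hA, hSsymm i j]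
  set lam : Fin n → ℝ := hHerm.eigenvalues with hlam
  have h1 : ∑ i, lam i = 0 := by
    have := trace_pow_eq_sum_eigenvalues A hHerm 1
    simp only [pow_one] at this
    rw [← this, Matrix.trace]
    simpa [Matrix.diag, hA] using hStr
  have h2 : ∑ i, (lam i)^2 = ∑ i, ∑ j, (S i j)^2 := by
    have := trace_pow_eq_sum_eigenvalues A hHerm 2
    rw [← this, pow_two, Matrix.trace]
    simp only [Matrix.diag, Matrix.mul_apply, hA, Matrix.of_apply]
    refine Finset.sum_congr rfl fun i _ => Finset.sum_congr rfl fun j _ => ?_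
    rw [pow_two, hSsymm j i]
  have h3 : ∑ i, (lam i)^3 = ∑ i, ∑ j, ∑ k, S i j * S j k * S k i := by
    have := trace_pow_eq_sum_eigenvalues A hHerm 3
    rw [← this, pow_succ, pow_two, Matrix.trace]
    simp only [Matrix.diag, Matrix.mul_apply, Finset.sum_mul, hA, Matrix.of_apply]
    exact Finset.sum_congr rfl fun i _ => Finset.sum_comm
  have := okumura_scalar n hn lam h1
  rw [h2, h3] at this
  exact this
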